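/- Let d₁, d₂ be positive integers. The rank-one projections onto unit simple-tensor vectors span, over the real numbers, the real vector space of all Hermitian matrices indexed by (Fin d₁ × Fin d₂): every Hermitian matrix M over ℂ indexed by (Fin d₁ × Fin d₂) can be written as a finite real linear combination M = Σ_α c_α • (w_α w_αᴴ), where each w_α = x_α ⊗ y_α is a unit simple-tensor vector (x_α : Fin d₁ → ℂ, y_α : Fin d₂ → ℂ unit vectors, w_α(i,j) = x_α i · y_α j) and c_α ∈ ℝ. -/

import Mathlib

open Matrix Finset

noncomputable section

lemma herm_rank_one {n : ℕ} (A : Matrix (Fin n) (Fin n) ℂ) (hA : A.IsHermitian) :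
    ∃ (c : Fin n → ℝ) (v : Fin n → Fin n → ℂ),
      (∀ i, star (v i) ⬝ᵥ v i = 1) ∧
      A = ∑ i, c i • vecMulVec (v i) (star (v i)) := by
  refine ⟨hA.eigenvalues,
    fun i a => (hA.eigenvectorUnitary : Matrix (Fin n) (Fin n) ℂ) a i, fun i => ?_, ?_⟩
  · have h1 : (star (hA.eigenvectorUnitary : Matrix (Fin n) (Fin n) ℂ) *
        (hA.eigenvectorUnitary : Matrix (Fin n) (Fin n) ℂ)) = 1 := by
      rw [← Unitary.coe_star, ← Submonoid.coe_mul, Unitary.star_mul_self]; rfl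
    have := congrFun (congrFun h1 i) i
    simpa [Matrix.mul_apply, Matrix.one_apply, dotProduct, mul_comm] using this
  · conv_lhs => rw [hA.spectral_theorem]
    ext a b
    simp [Matrix.mul_apply, Matrix.sum_apply, vecMulVec_apply, diagonal_apply,
      Finset.sum_ite_eq, Complex.real_smul, mul_comm, mul_assoc, mul_left_comm]

def projSet (d₁ d₂ : ℕ) : Set (Matrix (Fin d₁ × Fin d₂) (Fin d₁ × Fin d₂) ℂ) :=
  {P | ∃ (x : Fin d₁ → ℂ) (y : Fin d₂ → ℂ), star x ⬝ᵥ x = 1 ∧ star y ⬝ᵥ y = 1 ∧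
    P = Matrix.vecMulVec (fun q : Fin d₁ × Fin d₂ => x q.1 * y q.2)
          (star fun q : Fin d₁ × Fin d₂ => x q.1 * y q.2)}

lemma kron_mem {d₁ d₂ : ℕ} (A : Matrix (Fin d₁) (Fin d₁) ℂ) (B : Matrix (Fin d₂) (Fin d₂) ℂ)
    (hA : A.IsHermitian) (hB : B.IsHermitian) :
    (Matrix.of fun (p q : Fin d₁ × Fin d₂) => A p.1 q.1 * B p.2 q.2) ∈
      Submodule.span ℝ (projSet d₁ d₂) := by
  obtain ⟨a, x, hx, hAeq⟩ := herm_rank_one A hA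
  obtain ⟨b, y, hy, hBeq⟩ := herm_rank_one B hB
  have key : (Matrix.of fun (p q : Fin d₁ × Fin d₂) => A p.1 q.1 * B p.2 q.2) =
      ∑ α : Fin d₁, ∑ β : Fin d₂, (a α * b β) •
        Matrix.vecMulVec (fun q : Fin d₁ × Fin d₂ => x α q.1 * y β q.2)
          (star fun q : Fin d₁ × Fin d₂ => x α q.1 * y β q.2) := by
    ext p q
    have h1 := congrFun (congrFun hAeq p.1) q.1
    have h2 := congrFun (congrFun hBeq p.2) q.2
    simp only [Matrix.sum_apply, Matrix.smul_apply, vecMulVec_apply, Pi.star_apply,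
      Complex.real_smul, of_apply, Complex.ofReal_mul] at h1 h2 ⊢
    rw [h1, h2, Finset.sum_mul_sum]
    refine Finset.sum_congr rfl fun α _ => Finset.sum_congr rfl fun β _ => ?_
    simp only [star_mul']
    ring
  rw [key]
  exact Submodule.sum_mem _ fun α _ => Submodule.sum_mem _ fun β _ =>
    Submodule.smul_mem _ _ (Submodule.subset_span ⟨x α, y β, hx α, hy β, rfl⟩)

def symM {n : ℕ} (i k : Fin n) : Matrix (Fin n) (Fin n) ℂ :=
  Matrix.of fun a b => (if a = i ∧ b = k then 1 else 0) + (if a = k ∧ b = i then 1 else 0)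

def asymM {n : ℕ} (i k : Fin n) : Matrix (Fin n) (Fin n) ℂ :=
  Matrix.of fun a b => Complex.I * (if a = i ∧ b = k then 1 else 0)
    - Complex.I * (if a = k ∧ b = i then 1 else 0)

lemma symM_herm {n : ℕ} (i k : Fin n) : (symM i k).IsHermitian := by
  ext a b
  simp only [symM, conjTranspose_apply, of_apply, star_add]
  rw [add_comm]
  congr 1 <;> simp [apply_ite (star : ℂ → ℂ), and_comm]

lemma asymM_herm {n : ℕ} (i k : Fin n) : (asymM i k).IsHermitian := by
  ext a b
  simp only [asymM, conjTranspose_apply, of_apply, star_sub, star_mul',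
    Complex.star_def, Complex.conj_I]
  rw [show ((if a = i ∧ b = k then (1:ℂ) else 0)) = (if b = k ∧ a = i then (1:ℂ) else 0) by
      simp [and_comm],
    show ((if a = k ∧ b = i then (1:ℂ) else 0)) = (if b = i ∧ a = k then (1:ℂ) else 0) by
      simp [and_comm]]
  simp [apply_ite (starRingEnd ℂ)]
  split_ifs <;> ring

def pairMat (d₁ d₂ : ℕ) (i k : Fin d₁) (j l : Fin d₂) (z : ℂ) :
    Matrix (Fin d₁ × Fin d₂) (Fin d₁ × Fin d₂) ℂ :=
  Matrix.of fun a b =>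
    z * ((if a.1 = i ∧ b.1 = k then 1 else 0) * (if a.2 = j ∧ b.2 = l then 1 else 0))
    + (starRingEnd ℂ) z *
      ((if a.1 = k ∧ b.1 = i then 1 else 0) * (if a.2 = l ∧ b.2 = j then 1 else 0))

lemma pairMat_mem {d₁ d₂ : ℕ} (i k : Fin d₁) (j l : Fin d₂) (z : ℂ) :
    pairMat d₁ d₂ i k j l z ∈ Submodule.span ℝ (projSet d₁ d₂) := by
  have key : pairMat d₁ d₂ i k j l z =
      (z.re / 2) • (Matrix.of fun (p q : Fin d₁ × Fin d₂) =>
          symM i k p.1 q.1 * symM j l p.2 q.2)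
      + (-(z.re / 2)) • (Matrix.of fun (p q : Fin d₁ × Fin d₂) =>
          asymM i k p.1 q.1 * asymM j l p.2 q.2)
      + (z.im / 2) • (Matrix.of fun (p q : Fin d₁ × Fin d₂) =>
          symM i k p.1 q.1 * asymM j l p.2 q.2)
      + (z.im / 2) • (Matrix.of fun (p q : Fin d₁ × Fin d₂) =>
          asymM i k p.1 q.1 * symM j l p.2 q.2) := by
    ext a b
    simp only [pairMat, symM, asymM, Matrix.add_apply, Matrix.smul_apply, of_apply,
      Complex.real_smul]
    rw [show z = (z.re : ℂ) + z.im * Complex.I from (Complex.re_add_im z).symm ▸ rfl]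
    simp only [map_add, _root_.map_mul, Complex.conj_ofReal, Complex.conj_I,
      Complex.ofReal_div, Complex.ofReal_ofNat, Complex.ofReal_neg]
    simp only [Complex.ext_iff, Complex.add_re, Complex.add_im, Complex.mul_re,
      Complex.mul_im, Complex.sub_re, Complex.sub_im, Complex.neg_re, Complex.neg_im,
      Complex.I_re, Complex.I_im, Complex.ofReal_re, Complex.ofReal_im,
      Complex.div_re, Complex.div_im, Complex.re_ofNat, Complex.im_ofNat,
      Complex.normSq_ofNat]
    constructor <;> ring
  rw [key]
  refine Submodule.add_mem _ (Submodule.add_mem _ (Submodule.add_mem _ ?_ ?_) ?_) ?_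
  · exact Submodule.smul_mem _ _ (kron_mem _ _ (symM_herm i k) (symM_herm j l))
  · exact Submodule.smul_mem _ _ (kron_mem _ _ (asymM_herm i k) (asymM_herm j l))
  · exact Submodule.smul_mem _ _ (kron_mem _ _ (symM_herm i k) (asymM_herm j l))
  · exact Submodule.smul_mem _ _ (kron_mem _ _ (asymM_herm i k) (symM_herm j l))

lemma ite_prod {d₁ d₂ : ℕ} (p q a b : Fin d₁ × Fin d₂) :
    ((if a.1 = p.1 ∧ b.1 = q.1 then (1:ℂ) else 0) *
      (if a.2 = p.2 ∧ b.2 = q.2 then (1:ℂ) else 0)) = if a = p ∧ b = q then 1 else 0 := by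
  by_cases h1 : a.1 = p.1 <;> by_cases h2 : b.1 = q.1 <;> by_cases h3 : a.2 = p.2 <;>
    by_cases h4 : b.2 = q.2 <;> simp [Prod.ext_iff, h1, h2, h3, h4]

lemma pairMat_eq {d₁ d₂ : ℕ} (p q : Fin d₁ × Fin d₂) (z : ℂ) :
    pairMat d₁ d₂ p.1 q.1 p.2 q.2 z =
      Matrix.single p q z + Matrix.single q p ((starRingEnd ℂ) z) := by
  ext a b
  show z * _ + (starRingEnd ℂ) z * _ = _
  rw [ite_prod p q a b, ite_prod q p a b]
  simp only [Matrix.single, Matrix.add_apply, of_apply, mul_ite, mul_one, mul_zero]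
  congr 1 <;> refine if_congr ?_ rfl rfl <;> constructor <;>
    exact fun h => ⟨h.1.symm, h.2.symm⟩

theorem hermitian_spanned_by_product_projections (d₁ d₂ : ℕ) (hd₁ : 0 < d₁) (hd₂ : 0 < d₂)
    (M : Matrix (Fin d₁ × Fin d₂) (Fin d₁ × Fin d₂) ℂ) (hM : M.IsHermitian) :
    ∃ (m : ℕ) (c : Fin m → ℝ) (x : Fin m → Fin d₁ → ℂ) (y : Fin m → Fin d₂ → ℂ),
      (∀ α, star (x α) ⬝ᵥ x α = 1) ∧ (∀ α, star (y α) ⬝ᵥ y α = 1) ∧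
      M = ∑ α, c α •
        Matrix.vecMulVec (fun q : Fin d₁ × Fin d₂ => x α q.1 * y α q.2)
          (star fun q : Fin d₁ × Fin d₂ => x α q.1 * y α q.2) := by
  have hspan : M ∈ Submodule.span ℝ (projSet d₁ d₂) := by
    have hsum2 : ∑ p : Fin d₁ × Fin d₂, ∑ q : Fin d₁ × Fin d₂,
        Matrix.single q p ((starRingEnd ℂ) (M p q)) = Mᴴ := by
      rw [Finset.sum_comm]
      conv_rhs => rw [matrix_eq_sum_single Mᴴ]
      refine Finset.sum_congr rfl fun q _ => Finset.sum_congr rfl fun p _ => ?_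
      rw [Matrix.conjTranspose_apply, Complex.star_def]
    have key : M = ∑ p : Fin d₁ × Fin d₂, ∑ q : Fin d₁ × Fin d₂,
        (1/2 : ℝ) • pairMat d₁ d₂ p.1 q.1 p.2 q.2 (M p q) := by
      simp only [pairMat_eq, smul_add, Finset.sum_add_distrib, ← Finset.smul_sum]
      rw [← matrix_eq_sum_single M, hsum2, hM, ← add_smul]
      norm_num
    rw [key]
    exact Submodule.sum_mem _ fun p _ => Submodule.sum_mem _ fun q _ =>
      Submodule.smul_mem _ _ (pairMat_mem _ _ _ _ _)
  obtain ⟨m, f, g, hg⟩ := Submodule.mem_span_set'.mp hspan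
  have hg2 : ∀ α, ∃ (x : Fin d₁ → ℂ) (y : Fin d₂ → ℂ),
      star x ⬝ᵥ x = 1 ∧ star y ⬝ᵥ y = 1 ∧ (g α : Matrix _ _ ℂ) =
        Matrix.vecMulVec (fun q : Fin d₁ × Fin d₂ => x q.1 * y q.2)
          (star fun q : Fin d₁ × Fin d₂ => x q.1 * y q.2) := fun α => (g α).2
  choose x y hx hy hP using hg2
  exact ⟨m, f, x, y, hx, hy, by
    rw [← hg]
    exact Finset.sum_congr rfl fun α _ => by rw [hP α]⟩
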